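/- Let r_{n,b}(·;z) be the unique solution of r(x) = ζ + ζ v r(x) U_r(x) with sup_x |r(x)| ≤ 2/η, and let d_{n,b}(x;z) = r_{n,b}(x;z) − w(z). Then for every ε > 0 there exists a number L = L(ε) such that for all sufficiently large b and n (with b = n^χ, 1/3 < χ < 1), sup over x ∈ B_L of |d_{n,b}(x;z)| ≤ ε for all z ∈ Λ_η. -/

import Mathlib

open MeasureTheory ProbabilityTheory Filter Asymptotics

noncomputable section

/-- The variance profile `U^{(b)}(x,y) = b⁻¹ · u((x-y)/b)` for integer coordinates. -/
def bandU (u : ℝ → ℝ) (b : ℝ) (x y : ℤ) : ℝ := b⁻¹ * u (((x : ℝ) - (y : ℝ)) / b)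

/-- The integer coordinate of the index `i : Fin (2n+1)`, running over `-n, …, n`. -/
def coordZ (n : ℕ) (i : Fin (2 * n + 1)) : ℤ := (i : ℤ) - (n : ℤ)

/-- The index in `Fin (2n+1)` of the integer coordinate `x` (for `|x| ≤ n`). -/
def coordFin (n : ℕ) (x : ℤ) : Fin (2 * n + 1) :=
  ⟨(x + (n : ℤ)).toNat % (2 * n + 1), Nat.mod_lt _ (by omega)⟩

/-- The band random matrix `H^{(n,b)}` built from the Gaussian field `a`. -/
def bandH {Ω : Type*} (u : ℝ → ℝ) (b : ℝ) (n : ℕ) (a : ℤ → ℤ → Ω → ℝ) (ω : Ω) :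
    Matrix (Fin (2 * n + 1)) (Fin (2 * n + 1)) ℝ := fun i j =>
  a (min (coordZ n i) (coordZ n j)) (max (coordZ n i) (coordZ n j)) ω *
    Real.sqrt (bandU u b (coordZ n i) (coordZ n j))

/-- The resolvent `(H - z·I)⁻¹` of a real matrix, as a complex matrix. -/
def resolv {N : ℕ} (H : Matrix (Fin N) (Fin N) ℝ) (z : ℂ) : Matrix (Fin N) (Fin N) ℂ :=
  (H.map (fun t => (t : ℂ)) - z • 1)⁻¹

/-- Entry `G^{(n,b)}(x,y;z)` of the resolvent, indexed by integers `x, y ∈ {-n,…,n}`. -/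
def Gent {Ω : Type*} (u : ℝ → ℝ) (b : ℝ) (n : ℕ) (a : ℤ → ℤ → Ω → ℝ) (z : ℂ) (ω : Ω)
    (x y : ℤ) : ℂ :=
  resolv (bandH u b n a ω) z (coordFin n x) (coordFin n y)

/-- Entry `(G²)(x,y;z)` of the matrix square of the resolvent. -/
def Gent2 {Ω : Type*} (u : ℝ → ℝ) (b : ℝ) (n : ℕ) (a : ℤ → ℤ → Ω → ℝ) (z : ℂ) (ω : Ω)
    (x y : ℤ) : ℂ :=
  (resolv (bandH u b n a ω) z * resolv (bandH u b n a ω) z) (coordFin n x) (coordFin n y)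

/-- The normalized trace `⟨G⟩ = N⁻¹ Tr G^{(n,b)}(z)`. -/
def traceG {Ω : Type*} (u : ℝ → ℝ) (b : ℝ) (n : ℕ) (a : ℤ → ℤ → Ω → ℝ) (z : ℂ) (ω : Ω) : ℂ :=
  ((2 * n + 1 : ℕ) : ℂ)⁻¹ * Matrix.trace (resolv (bandH u b n a ω) z)

/-- `U_G(x) = Σ_{|s| ≤ n} G(s,s) U^{(b)}(s,x)`. -/
def UG {Ω : Type*} (u : ℝ → ℝ) (b : ℝ) (n : ℕ) (a : ℤ → ℤ → Ω → ℝ) (z : ℂ) (ω : Ω)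
    (x : ℤ) : ℂ :=
  ∑ s ∈ Finset.Icc (-(n : ℤ)) (n : ℤ), Gent u b n a z ω s s * (bandU u b s x : ℂ)

/-- The matrix `U^{(b)}` as a `(2n+1) × (2n+1)` matrix. -/
def bandUmat (u : ℝ → ℝ) (b : ℝ) (n : ℕ) : Matrix (Fin (2 * n + 1)) (Fin (2 * n + 1)) ℝ :=
  fun i j => bandU u b (coordZ n i) (coordZ n j)

/-- The Fourier transform `ũ_F(p) = ∫ u(t) e^{ipt} dt`. -/
def uFourier (u : ℝ → ℝ) (p : ℝ) : ℂ :=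
  ∫ t : ℝ, (u t : ℂ) * Complex.exp (Complex.I * (p : ℂ) * (t : ℂ))
/-- Centered random variable `ξ° = ξ - E ξ`. -/
def centered {Ω : Type*} [MeasurableSpace Ω] (μ : Measure Ω) (f : Ω → ℂ) (ω : Ω) : ℂ :=
  f ω - ∫ ω', f ω' ∂μ

/-- Variance `E|ξ - E ξ|²` of a complex random variable. -/
def varC {Ω : Type*} [MeasurableSpace Ω] (μ : Measure Ω) (f : Ω → ℂ) : ℝ :=
  ∫ ω, ‖f ω - ∫ ω', f ω' ∂μ‖ ^ 2 ∂μ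


open MeasureTheory Filter Set
section
variable {u : ℝ → ℝ} {ub b : ℝ}


lemma half_integral {u : ℝ → ℝ} (hu_even : ∀ t, u (-t) = u t)
    (hu_L1 : MeasureTheory.Integrable u) (hu_int : (∫ t, u t) = 1) :
    (∫ t in Set.Ioi (0:ℝ), u t) = 1/2 := by
  have h1 : (∫ t in Set.Ioi (0:ℝ), u t) = ∫ t in Set.Iic (0:ℝ), u t := by
    have := integral_comp_neg_Ioi (0:ℝ) u
    simp only [hu_even, neg_zero] at this
    exact this
  have h2 := intervalIntegral.integral_Iic_add_Ioi (b := (0:ℝ))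
    hu_L1.integrableOn hu_L1.integrableOn
  rw [hu_int] at h2
  rw [h1] at h2 ⊢
  linarith

lemma zsum_shift (F : ℤ → ℝ) (a : ℤ) (m : ℕ) :
    ∑ k ∈ Finset.Icc a (a + m - 1), F k = ∑ i ∈ Finset.range m, F (a + i) := by
  induction m with
  | zero => simp [Finset.Icc_eq_empty_of_lt (by omega : a + (0:ℕ) - 1 < a)]
  | succ m ih =>
    have h1 : Finset.Icc a (a + (m+1:ℕ) - 1) = insert (a + m) (Finset.Icc a (a + m - 1)) := by
      ext k; simp only [Finset.mem_Icc, Finset.mem_insert]; push_cast; omega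
    rw [h1, Finset.sum_insert (by simp only [Finset.mem_Icc]; omega), ih,
      Finset.sum_range_succ]
    ring

lemma zsum_reflect (F : ℤ → ℝ) (a c : ℤ) :
    ∑ k ∈ Finset.Icc (-c) (-a), F k = ∑ k ∈ Finset.Icc a c, F (-k) := by
  refine Finset.sum_nbij' (fun k => -k) (fun k => -k)
    (fun k hk => ?_) (fun k hk => ?_) (fun k hk => by ring) (fun k hk => by ring)
    (fun k hk => by simp) <;>
  · simp only [Finset.mem_Icc] at *; omega

lemma zsum_translate (H : ℤ → ℝ) (A C x : ℤ) :
    ∑ s ∈ Finset.Icc A C, H (s - x) = ∑ k ∈ Finset.Icc (A - x) (C - x), H k := by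
  refine Finset.sum_nbij' (fun s => s - x) (fun k => k + x)
    (fun k hk => ?_) (fun k hk => ?_) (fun k hk => by ring) (fun k hk => by ring)
    (fun k hk => by simp) <;>
  · simp only [Finset.mem_Icc] at *; omega

lemma riemann_upper (hu_nonneg : ∀ t, 0 ≤ u t)
    (hu_mono : ∀ ⦃s t : ℝ⦄, 0 ≤ s → s ≤ t → u t ≤ u s) (hu_L1 : Integrable u)
    (hb : 0 < b) {c : ℝ} (hc : 0 ≤ c) (m : ℕ) :
    ∑ i ∈ Finset.range m, u ((c + (i + 1)) / b) ≤ b * ∫ t in Ioi (c / b), u t := by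
  have hf : AntitoneOn (fun t => u (t / b)) (Icc c (c + m)) := by
    intro s hs t ht hst
    exact hu_mono (div_nonneg (le_trans hc hs.1) hb.le) (by gcongr)
  have h := hf.sum_le_integral
  calc ∑ i ∈ Finset.range m, u ((c + (i + 1)) / b)
      = ∑ i ∈ Finset.range m, (fun t => u (t / b)) (c + ((i + 1 : ℕ) : ℝ)) := by
        refine Finset.sum_congr rfl fun i _ => ?_; push_cast; norm_num
    _ ≤ ∫ t in c..(c + m), u (t / b) := h
    _ = b * ∫ t in (c/b)..((c + m)/b), u t := by
        rw [intervalIntegral.integral_comp_div (c := b) (f := u) hb.ne']; simp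
    _ ≤ b * ∫ t in Ioi (c / b), u t := by
        have h1 : (∫ t in (c/b)..((c + m)/b), u t) = ∫ t in Ioc (c/b) ((c+m)/b), u t := by
          rw [intervalIntegral.integral_of_le
            (by gcongr; exact le_add_of_nonneg_right (by positivity))]
        rw [h1]
        refine mul_le_mul_of_nonneg_left ?_ hb.le
        refine setIntegral_mono_set hu_L1.integrableOn
          (Eventually.of_forall fun t => hu_nonneg t) (HasSubset.Subset.eventuallyLE ?_)
        exact Ioc_subset_Ioi_self

lemma riemann_lower (hu_mono : ∀ ⦃s t : ℝ⦄, 0 ≤ s → s ≤ t → u t ≤ u s)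
    (hb : 0 < b) {c : ℝ} (hc : 0 ≤ c) (m : ℕ) :
    b * ∫ t in (c/b)..((c + m)/b), u t ≤ ∑ i ∈ Finset.range m, u ((c + i) / b) := by
  have hf : AntitoneOn (fun t => u (t / b)) (Icc c (c + m)) := by
    intro s hs t ht hst
    exact hu_mono (div_nonneg (le_trans hc hs.1) hb.le) (by gcongr)
  have h := hf.integral_le_sum
  calc b * ∫ t in (c/b)..((c + m)/b), u t
      = ∫ t in c..(c + m), u (t / b) := by
        rw [intervalIntegral.integral_comp_div (c := b) (f := u) hb.ne']; simp
    _ ≤ ∑ i ∈ Finset.range m, (fun t => u (t / b)) (c + (i : ℕ)) := h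
    _ = ∑ i ∈ Finset.range m, u ((c + i) / b) := Finset.sum_congr rfl fun i _ => rfl

lemma side_sum (hu_nonneg : ∀ t, 0 ≤ u t)
    (hu_mono : ∀ ⦃s t : ℝ⦄, 0 ≤ s → s ≤ t → u t ≤ u s) (hu_L1 : Integrable u)
    (hub : ∀ t, u t ≤ ub) (hub0 : 0 ≤ ub) (hb : 0 < b)
    (m₀ P : ℤ) (hm : 1 ≤ m₀) :
    ∑ k ∈ Finset.Icc m₀ P, b⁻¹ * u ((k : ℝ) / b) ≤
      ub / b + ∫ t in Ioi ((m₀ : ℝ) / b), u t := by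
  have hint : (0:ℝ) ≤ ∫ t in Ioi ((m₀ : ℝ) / b), u t :=
    setIntegral_nonneg measurableSet_Ioi fun t _ => hu_nonneg t
  by_cases hP : P < m₀
  · rw [Finset.Icc_eq_empty_of_lt hP, Finset.sum_empty]
    positivity
  push_neg at hP
  set len := (P - m₀ + 1).toNat with hlen
  have hP' : P = m₀ + len - 1 := by omega
  obtain ⟨len', hlen'⟩ : ∃ l, len = l + 1 := ⟨len - 1, by omega⟩
  rw [hP', zsum_shift, hlen', Finset.sum_range_succ']
  have h1 : b⁻¹ * u (((m₀ : ℤ) + (0:ℕ) : ℤ) / b : ℝ) ≤ ub / b := by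
    calc b⁻¹ * u (((m₀ : ℤ) + (0:ℕ) : ℤ) / b : ℝ) ≤ b⁻¹ * ub := by
          have : (0:ℝ) ≤ b⁻¹ := inv_nonneg.mpr hb.le
          gcongr
          exact hub _
      _ = ub / b := by ring
  have h2 : ∑ i ∈ Finset.range len', b⁻¹ * u ((((m₀ : ℤ) + (i + 1 : ℕ) : ℤ) : ℝ) / b) ≤
      ∫ t in Ioi ((m₀ : ℝ) / b), u t := by
    have hc : (0:ℝ) ≤ (m₀ : ℝ) := by exact_mod_cast le_trans zero_le_one hm
    have := riemann_upper hu_nonneg hu_mono hu_L1 hb hc len'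
    calc ∑ i ∈ Finset.range len', b⁻¹ * u ((((m₀ : ℤ) + (i + 1 : ℕ) : ℤ) : ℝ) / b)
        = b⁻¹ * ∑ i ∈ Finset.range len', u (((m₀:ℝ) + ((i:ℝ) + 1)) / b) := by
          rw [Finset.mul_sum]
          refine Finset.sum_congr rfl fun i _ => ?_
          push_cast; ring_nf
      _ ≤ b⁻¹ * (b * ∫ t in Ioi ((m₀ : ℝ) / b), u t) := by
          gcongr
      _ = ∫ t in Ioi ((m₀ : ℝ) / b), u t := by field_simp
  calc (∑ i ∈ Finset.range len', b⁻¹ * u ((((m₀ : ℤ) + (i + 1 : ℕ) : ℤ) : ℝ) / b))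
        + b⁻¹ * u (((m₀ : ℤ) + (0:ℕ) : ℤ) / b : ℝ)
      ≤ (∫ t in Ioi ((m₀ : ℝ) / b), u t) + ub / b := by gcongr ?_ + ?_ -- h2 h1
    _ = ub / b + ∫ t in Ioi ((m₀ : ℝ) / b), u t := by ring
end

section
variable {u : ℝ → ℝ} {ub b : ℝ}
open MeasureTheory Filter Set


lemma bandU_eq_g (s x : ℤ) :
    bandU u b s x = b⁻¹ * u (((s - x : ℤ) : ℝ) / b) := by
  unfold bandU; push_cast; ring_nf

lemma g_even (hu_even : ∀ t, u (-t) = u t) (k : ℤ) :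
    b⁻¹ * u (((-k : ℤ) : ℝ) / b) = b⁻¹ * u ((k : ℝ) / b) := by
  push_cast [neg_div]; rw [hu_even]

lemma S_upper (hu_even : ∀ t, u (-t) = u t) (hu_nonneg : ∀ t, 0 ≤ u t)
    (hu_mono : ∀ ⦃s t : ℝ⦄, 0 ≤ s → s ≤ t → u t ≤ u s) (hu_L1 : Integrable u)
    (hub : ∀ t, u t ≤ ub) (hub0 : 0 ≤ ub) (hb : 0 < b)
    (hhalf : (∫ t in Ioi (0:ℝ), u t) = 1/2)
    (n : ℕ) (hn : 1 ≤ n) (x : ℤ) :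
    ∑ s ∈ Finset.Icc (-(n:ℤ)) (n:ℤ), bandU u b s x ≤ 1 + 3 * ub / b := by
  have hbinv : (0:ℝ) ≤ b⁻¹ := inv_nonneg.mpr hb.le
  have hgnn : ∀ k : ℤ, 0 ≤ b⁻¹ * u ((k : ℝ) / b) := fun k => mul_nonneg hbinv (hu_nonneg _)
  set Q : ℤ := (n : ℤ) + |x| with hQ
  have hQ1 : 1 ≤ Q := by have := abs_nonneg x; omega
  have step1 : ∑ s ∈ Finset.Icc (-(n:ℤ)) (n:ℤ), bandU u b s x
      = ∑ k ∈ Finset.Icc (-(n:ℤ) - x) ((n:ℤ) - x), b⁻¹ * u ((k : ℝ) / b) := by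
    rw [← zsum_translate (fun k => b⁻¹ * u ((k : ℝ) / b)) (-(n:ℤ)) (n:ℤ) x]
    exact Finset.sum_congr rfl fun s _ => bandU_eq_g s x
  rw [step1]
  have step2 : ∑ k ∈ Finset.Icc (-(n:ℤ) - x) ((n:ℤ) - x), b⁻¹ * u ((k : ℝ) / b)
      ≤ ∑ k ∈ Finset.Icc (-Q) Q, b⁻¹ * u ((k : ℝ) / b) := by
    refine Finset.sum_le_sum_of_subset_of_nonneg ?_ (fun k _ _ => hgnn k)
    intro k hk; simp only [Finset.mem_Icc] at *
    constructor <;> [skip; skip] <;> cases abs_cases x <;> omega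
  have hsplit : Finset.Icc (-Q) Q =
      Finset.Icc (-Q) (-1) ∪ (insert 0 (Finset.Icc 1 Q)) := by
    ext k; simp only [Finset.mem_Icc, Finset.mem_union, Finset.mem_insert]; omega
  have hdisj : Disjoint (Finset.Icc (-Q) (-1)) (insert 0 (Finset.Icc 1 Q)) := by
    simp only [Finset.disjoint_left, Finset.mem_Icc, Finset.mem_insert]
    intro k hk; omega
  have hside : ∑ k ∈ Finset.Icc 1 Q, b⁻¹ * u ((k : ℝ) / b) ≤ ub / b + 1/2 := by
    have h := side_sum hu_nonneg hu_mono hu_L1 hub hub0 hb 1 Q le_rfl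
    have hmono : (∫ t in Ioi (((1:ℤ) : ℝ) / b), u t) ≤ ∫ t in Ioi (0:ℝ), u t := by
      refine setIntegral_mono_set hu_L1.integrableOn
        (Eventually.of_forall fun t => hu_nonneg t) (HasSubset.Subset.eventuallyLE ?_)
      exact Ioi_subset_Ioi (by positivity)
    rw [hhalf] at hmono
    exact le_trans h (by linarith)
  have hneg : ∑ k ∈ Finset.Icc (-Q) (-1), b⁻¹ * u ((k : ℝ) / b)
      = ∑ k ∈ Finset.Icc 1 Q, b⁻¹ * u ((k : ℝ) / b) := by
    rw [zsum_reflect (fun k => b⁻¹ * u ((k : ℝ) / b)) 1 Q]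
    exact Finset.sum_congr rfl fun k _ => g_even hu_even k
  have hzero : b⁻¹ * u (((0:ℤ) : ℝ) / b) ≤ ub / b := by
    have : b⁻¹ * u (((0:ℤ) : ℝ) / b) ≤ b⁻¹ * ub := by gcongr; exact hub _
    calc b⁻¹ * u (((0:ℤ) : ℝ) / b) ≤ b⁻¹ * ub := this
      _ = ub / b := by ring
  rw [hsplit, Finset.sum_union hdisj, Finset.sum_insert (by simp)] at step2
  calc ∑ k ∈ Finset.Icc (-(n:ℤ) - x) ((n:ℤ) - x), b⁻¹ * u ((k : ℝ) / b)
      ≤ (∑ k ∈ Finset.Icc (-Q) (-1), b⁻¹ * u ((k : ℝ) / b)) +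
        (b⁻¹ * u (((0:ℤ) : ℝ) / b) + ∑ k ∈ Finset.Icc 1 Q, b⁻¹ * u ((k : ℝ) / b)) := step2
    _ ≤ (ub / b + 1/2) + (ub / b + (ub / b + 1/2)) := by
        rw [hneg]; gcongr
    _ = 1 + 3 * ub / b := by ring
end

section
variable {u : ℝ → ℝ} {ub b : ℝ}
open MeasureTheory Filter Set

lemma S_lower (hu_even : ∀ t, u (-t) = u t) (hu_nonneg : ∀ t, 0 ≤ u t)
    (hu_mono : ∀ ⦃s t : ℝ⦄, 0 ≤ s → s ≤ t → u t ≤ u s) (hu_L1 : Integrable u)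
    (hub : ∀ t, u t ≤ ub) (hub0 : 0 ≤ ub) (hb1 : 1 ≤ b)
    (n : ℕ) (W : ℕ) (hW : 1 ≤ W) (x : ℤ)
    (hx : ((|x| : ℤ) : ℝ) ≤ (n : ℝ) - b * (W : ℝ)) :
    2 * (∫ t in Ioc (0:ℝ) (W:ℝ), u t) - 3 * ub / b ≤
      ∑ s ∈ Finset.Icc (-(n:ℤ)) (n:ℤ), bandU u b s x := by
  have hb : (0:ℝ) < b := lt_of_lt_of_le one_pos hb1
  have hbinv : (0:ℝ) ≤ b⁻¹ := inv_nonneg.mpr hb.le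
  have hgnn : ∀ k : ℤ, 0 ≤ b⁻¹ * u ((k : ℝ) / b) := fun k => mul_nonneg hbinv (hu_nonneg _)
  have hbW : (0:ℝ) < b * W := by positivity
  set m : ℤ := ⌈b * (W:ℝ)⌉ with hm
  have hm1 : 1 ≤ m := by have : 0 < m := Int.ceil_pos.mpr hbW; omega
  have hmle : (b * W : ℝ) ≤ (m : ℝ) := Int.le_ceil _
  have hmn : m ≤ (n : ℤ) - |x| := by
    rw [hm, Int.ceil_le]; push_cast; push_cast at hx; linarith
  have hWmb : (W : ℝ) ≤ (m : ℝ) / b := by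
    rw [le_div_iff₀ hb]; linarith
  -- the sub-window
  have hsub : Finset.Icc (x - m) (x + m - 1) ⊆ Finset.Icc (-(n:ℤ)) (n:ℤ) := by
    intro k hk; simp only [Finset.mem_Icc] at *
    cases abs_cases x <;> omega
  have step1 : ∑ s ∈ Finset.Icc (x - m) (x + m - 1), bandU u b s x ≤
      ∑ s ∈ Finset.Icc (-(n:ℤ)) (n:ℤ), bandU u b s x := by
    refine Finset.sum_le_sum_of_subset_of_nonneg hsub (fun s _ _ => ?_)
    rw [bandU_eq_g]; exact hgnn _
  have step2 : ∑ s ∈ Finset.Icc (x - m) (x + m - 1), bandU u b s x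
      = ∑ k ∈ Finset.Icc (-m) (m - 1), b⁻¹ * u ((k : ℝ) / b) := by
    have := zsum_translate (fun k => b⁻¹ * u ((k : ℝ) / b)) (x - m) (x + m - 1) x
    rw [show x - m - x = -m by ring, show x + m - 1 - x = m - 1 by ring] at this
    rw [← this]
    exact Finset.sum_congr rfl fun s _ => bandU_eq_g s x
  have hsplit : Finset.Icc (-m) (m-1) = Finset.Icc (-m) (-1) ∪ Finset.Icc 0 (m-1) := by
    ext k; simp only [Finset.mem_Icc, Finset.mem_union]; omega
  have hdisj : Disjoint (Finset.Icc (-m) (-1)) (Finset.Icc 0 (m-1)) := by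
    simp only [Finset.disjoint_left, Finset.mem_Icc]; intro k hk; omega
  set mt : ℕ := m.toNat with hmt
  have hmtc : (mt : ℤ) = m := by omega
  -- right part: k ∈ Icc 0 (m-1)
  have hright : (∫ t in Ioc (0:ℝ) (W:ℝ), u t) ≤
      ∑ k ∈ Finset.Icc (0:ℤ) (m-1), b⁻¹ * u ((k : ℝ) / b) := by
    have hz := zsum_shift (fun k => b⁻¹ * u ((k : ℝ) / b)) 0 mt
    rw [show (0:ℤ) + mt - 1 = m - 1 by omega] at hz
    rw [hz]
    have hr := riemann_lower (u := u) hu_mono hb (le_refl (0:ℝ)) mt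
    have e1 : ∑ i ∈ Finset.range mt, b⁻¹ * u ((((0:ℤ) + (i:ℕ) : ℤ) : ℝ) / b)
        = b⁻¹ * ∑ i ∈ Finset.range mt, u ((0 + (i:ℝ)) / b) := by
      rw [Finset.mul_sum]; exact Finset.sum_congr rfl fun i _ => by push_cast; ring_nf
    rw [e1]
    have e2 : (∫ t in (0/b)..((0 + mt)/b), u t) = ∫ t in Ioc (0:ℝ) ((mt:ℝ)/b), u t := by
      rw [intervalIntegral.integral_of_le (by rw [zero_div]; positivity)]
      norm_num
    have e3 : (∫ t in Ioc (0:ℝ) (W:ℝ), u t) ≤ ∫ t in Ioc (0:ℝ) ((mt:ℝ)/b), u t := by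
      refine setIntegral_mono_set hu_L1.integrableOn
        (Eventually.of_forall fun t => hu_nonneg t) (HasSubset.Subset.eventuallyLE ?_)
      apply Ioc_subset_Ioc le_rfl
      rw [show ((mt:ℝ)) = ((m:ℤ):ℝ) from by exact_mod_cast hmtc]
      exact hWmb
    calc (∫ t in Ioc (0:ℝ) (W:ℝ), u t) ≤ ∫ t in Ioc (0:ℝ) ((mt:ℝ)/b), u t := e3
      _ = b⁻¹ * (b * ∫ t in (0/b)..((0 + mt)/b), u t) := by
          rw [e2]; field_simp
      _ ≤ b⁻¹ * ∑ i ∈ Finset.range mt, u ((0 + (i:ℝ)) / b) := by gcongr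
  -- left part: k ∈ Icc (-m) (-1)
  have hleft : (∫ t in Ioc (0:ℝ) (W:ℝ), u t) - ub / b ≤
      ∑ k ∈ Finset.Icc (-m) (-1:ℤ), b⁻¹ * u ((k : ℝ) / b) := by
    have hrefl : ∑ k ∈ Finset.Icc (-m) (-1:ℤ), b⁻¹ * u ((k : ℝ) / b)
        = ∑ k ∈ Finset.Icc (1:ℤ) m, b⁻¹ * u ((k : ℝ) / b) := by
      rw [zsum_reflect (fun k => b⁻¹ * u ((k : ℝ) / b)) 1 m]
      exact Finset.sum_congr rfl fun k _ => g_even hu_even k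
    rw [hrefl]
    have hz := zsum_shift (fun k => b⁻¹ * u ((k : ℝ) / b)) 1 mt
    rw [show (1:ℤ) + mt - 1 = m by omega] at hz
    rw [hz]
    have hr := riemann_lower (u := u) hu_mono hb (by norm_num : (0:ℝ) ≤ 1) mt
    have e1 : ∑ i ∈ Finset.range mt, b⁻¹ * u ((((1:ℤ) + (i:ℕ) : ℤ) : ℝ) / b)
        = b⁻¹ * ∑ i ∈ Finset.range mt, u ((1 + (i:ℝ)) / b) := by
      rw [Finset.mul_sum]; exact Finset.sum_congr rfl fun i _ => by push_cast; ring_nf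
    rw [e1]
    have e2 : (∫ t in (1/b)..((1 + mt)/b), u t) = ∫ t in Ioc (1/b) ((1+mt)/b), u t := by
      rw [intervalIntegral.integral_of_le
        (by have h9 : (1:ℝ) ≤ 1 + mt := le_add_of_nonneg_right (by positivity); gcongr)]
    -- ∫ over Ioc (1/b) W ≤ ∫ over Ioc (1/b) ((1+mt)/b)
    have hWle : (W:ℝ) ≤ (1 + mt)/b := by
      rw [show ((mt:ℝ)) = ((m:ℤ):ℝ) from by exact_mod_cast hmtc]
      rw [le_div_iff₀ hb]; linarith
    have h1bW : 1/b ≤ (W:ℝ) := by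
      calc 1/b ≤ 1 := by rw [div_le_one hb]; exact hb1
        _ ≤ (W:ℝ) := by exact_mod_cast hW
    have e3 : (∫ t in Ioc (1/b) (W:ℝ), u t) ≤ ∫ t in Ioc (1/b) ((1+mt)/b), u t := by
      refine setIntegral_mono_set hu_L1.integrableOn
        (Eventually.of_forall fun t => hu_nonneg t) (HasSubset.Subset.eventuallyLE ?_)
      exact Ioc_subset_Ioc le_rfl hWle
    have esplit : (∫ t in Ioc (0:ℝ) (W:ℝ), u t)
        = (∫ t in Ioc (0:ℝ) (1/b), u t) + ∫ t in Ioc (1/b) (W:ℝ), u t := by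
      rw [← setIntegral_union (Ioc_disjoint_Ioc_of_le le_rfl) measurableSet_Ioc
        hu_L1.integrableOn hu_L1.integrableOn,
        Ioc_union_Ioc_eq_Ioc (by positivity) h1bW]
    have esmall : (∫ t in Ioc (0:ℝ) (1/b), u t) ≤ ub / b := by
      calc (∫ t in Ioc (0:ℝ) (1/b), u t) ≤ ∫ _ in Ioc (0:ℝ) (1/b), ub := by
            refine setIntegral_mono_on hu_L1.integrableOn
              (integrableOn_const measure_Ioc_lt_top.ne)
              measurableSet_Ioc (fun t _ => hub t)
        _ = ub / b := by
            have hv : (volume (Ioc (0:ℝ) (1/b))).toReal = 1/b := by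
              rw [Real.volume_Ioc, sub_zero, ENNReal.toReal_ofReal (by positivity)]
            rw [setIntegral_const, measureReal_def, hv, smul_eq_mul]
            ring
    calc (∫ t in Ioc (0:ℝ) (W:ℝ), u t) - ub / b
        ≤ ∫ t in Ioc (1/b) (W:ℝ), u t := by rw [esplit]; linarith
      _ ≤ ∫ t in Ioc (1/b) ((1+mt)/b), u t := e3
      _ = b⁻¹ * (b * ∫ t in (1/b)..((1 + mt)/b), u t) := by rw [e2]; field_simp
      _ ≤ b⁻¹ * ∑ i ∈ Finset.range mt, u ((1 + (i:ℝ)) / b) := by gcongr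
  have hu3 : 0 ≤ ub / b := by positivity
  calc 2 * (∫ t in Ioc (0:ℝ) (W:ℝ), u t) - 3 * ub / b
      ≤ ((∫ t in Ioc (0:ℝ) (W:ℝ), u t) - ub / b) + (∫ t in Ioc (0:ℝ) (W:ℝ), u t) := by
        have h3 : 3 * ub / b = 3 * (ub / b) := by ring
        linarith
    _ ≤ (∑ k ∈ Finset.Icc (-m) (-1:ℤ), b⁻¹ * u ((k : ℝ) / b)) +
        ∑ k ∈ Finset.Icc (0:ℤ) (m-1), b⁻¹ * u ((k : ℝ) / b) := by gcongr
    _ = ∑ k ∈ Finset.Icc (-m) (m-1), b⁻¹ * u ((k : ℝ) / b) := by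
        rw [hsplit, Finset.sum_union hdisj]
    _ = ∑ s ∈ Finset.Icc (x - m) (x + m - 1), bandU u b s x := step2.symm
    _ ≤ _ := step1
end

section
variable {u : ℝ → ℝ} {ub b : ℝ}
open MeasureTheory Filter Set

lemma off_mass (hu_even : ∀ t, u (-t) = u t) (hu_nonneg : ∀ t, 0 ≤ u t)
    (hu_mono : ∀ ⦃s t : ℝ⦄, 0 ≤ s → s ≤ t → u t ≤ u s) (hu_L1 : Integrable u)
    (hub : ∀ t, u t ≤ ub) (hub0 : 0 ≤ ub) (hb : 0 < b)
    (n : ℕ) (x : ℤ) (m₀ : ℤ) (hm₀ : 1 ≤ m₀) (M : ℝ) (hMb : M ≤ (m₀ : ℝ) / b) :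
    ∑ s ∈ (Finset.Icc (-(n:ℤ)) (n:ℤ)).filter (fun s => m₀ ≤ |s - x|), bandU u b s x ≤
      2 * (ub / b) + 2 * ∫ t in Ioi M, u t := by
  have hbinv : (0:ℝ) ≤ b⁻¹ := inv_nonneg.mpr hb.le
  have hgnn : ∀ k : ℤ, 0 ≤ b⁻¹ * u ((k : ℝ) / b) := fun k => mul_nonneg hbinv (hu_nonneg _)
  have himg : ∑ s ∈ (Finset.Icc (-(n:ℤ)) (n:ℤ)).filter (fun s => m₀ ≤ |s - x|), bandU u b s x
      = ∑ k ∈ ((Finset.Icc (-(n:ℤ)) (n:ℤ)).filter (fun s => m₀ ≤ |s - x|)).image (· - x),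
          b⁻¹ * u ((k : ℝ) / b) := by
    rw [Finset.sum_image (fun a _ c _ h => by omega)]
    exact Finset.sum_congr rfl fun s _ => bandU_eq_g s x
  rw [himg]
  have hsubset : ((Finset.Icc (-(n:ℤ)) (n:ℤ)).filter (fun s => m₀ ≤ |s - x|)).image (· - x)
      ⊆ Finset.Icc m₀ ((n:ℤ) - x) ∪ Finset.Icc (-(n:ℤ) - x) (-m₀) := by
    intro k hk
    simp only [Finset.mem_image, Finset.mem_filter, Finset.mem_Icc, Finset.mem_union] at *
    obtain ⟨s, ⟨⟨h1, h2⟩, h3⟩, rfl⟩ := hk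
    cases abs_cases (s - x) <;> omega
  have hdisj : Disjoint (Finset.Icc m₀ ((n:ℤ) - x)) (Finset.Icc (-(n:ℤ) - x) (-m₀)) := by
    simp only [Finset.disjoint_left, Finset.mem_Icc]; intro k hk; omega
  have hbound : ∑ k ∈ Finset.Icc m₀ ((n:ℤ) - x) ∪ Finset.Icc (-(n:ℤ) - x) (-m₀),
      b⁻¹ * u ((k : ℝ) / b) ≤ 2 * (ub / b) + 2 * ∫ t in Ioi M, u t := by
    rw [Finset.sum_union hdisj]
    have htail : (∫ t in Ioi ((m₀:ℝ)/b), u t) ≤ ∫ t in Ioi M, u t := by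
      refine setIntegral_mono_set hu_L1.integrableOn
        (Eventually.of_forall fun t => hu_nonneg t) (HasSubset.Subset.eventuallyLE ?_)
      exact Ioi_subset_Ioi hMb
    have h1 := side_sum hu_nonneg hu_mono hu_L1 hub hub0 hb m₀ ((n:ℤ) - x) hm₀
    have h2 : ∑ k ∈ Finset.Icc (-(n:ℤ) - x) (-m₀), b⁻¹ * u ((k : ℝ) / b)
        ≤ ub / b + ∫ t in Ioi ((m₀:ℝ)/b), u t := by
      have hrefl : ∑ k ∈ Finset.Icc (-(n:ℤ) - x) (-m₀), b⁻¹ * u ((k : ℝ) / b)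
          = ∑ k ∈ Finset.Icc m₀ ((n:ℤ) + x), b⁻¹ * u ((k : ℝ) / b) := by
        have := zsum_reflect (fun k => b⁻¹ * u ((k : ℝ) / b)) m₀ ((n:ℤ) + x)
        rw [show -((n:ℤ) + x) = -(n:ℤ) - x by ring] at this
        rw [this]
        exact Finset.sum_congr rfl fun k _ => g_even hu_even k
      rw [hrefl]
      exact side_sum hu_nonneg hu_mono hu_L1 hub hub0 hb m₀ ((n:ℤ) + x) hm₀
    have := le_trans h1 (by linarith : ub / b + (∫ t in Ioi ((m₀:ℝ)/b), u t) ≤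
      ub / b + ∫ t in Ioi M, u t)
    linarith [le_trans h2 (by linarith : ub / b + (∫ t in Ioi ((m₀:ℝ)/b), u t) ≤
      ub / b + ∫ t in Ioi M, u t)]
  refine le_trans (Finset.sum_le_sum_of_subset_of_nonneg hsubset (fun k _ _ => hgnn k)) hbound
end

section
open MeasureTheory Filter Set

lemma w_properties (v η : ℝ) (hv : 0 < v) (hηd : η = 2 * Real.sqrt v + 1)
    (z w' : ℂ) (hz : η ≤ |z.im|) (hweq : w' = 1 / (-z - (v:ℂ) * w'))
    (hwsign : 0 ≤ w'.im * z.im) :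
    ‖w'‖ ≤ 1 / η ∧ w' = -z⁻¹ + -z⁻¹ * (v:ℂ) * w' ^ 2 := by
  have hη1 : 1 ≤ η := by
    rw [hηd]; have := Real.sqrt_nonneg v; linarith
  have hη0 : 0 < η := lt_of_lt_of_le one_pos hη1
  have hzim : z.im ≠ 0 := by
    intro h; rw [h] at hz; simp at hz; linarith
  have hz0 : z ≠ 0 := fun h => hzim (by rw [h]; rfl)
  set A : ℂ := -z - (v:ℂ) * w' with hA
  have hA0 : A ≠ 0 := by
    intro h
    rw [h] at hweq
    simp at hweq
    rw [hA, hweq] at h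
    simp at h
    exact hz0 h
  have hwA : w' * A = 1 := by
    rw [hweq]; field_simp
  have hAim : |A.im| ≥ |z.im| := by
    have : A.im = -z.im - v * w'.im := by
      rw [hA]; simp [Complex.sub_im, Complex.neg_im, Complex.mul_im, Complex.ofReal_re,
        Complex.ofReal_im]
    rw [this]
    rcases lt_trichotomy z.im 0 with h | h | h
    · have hw : w'.im ≤ 0 := by nlinarith [hwsign]
      have hvw : v * w'.im ≤ 0 := mul_nonpos_of_nonneg_of_nonpos hv.le hw
      rw [abs_of_nonneg (by linarith), abs_of_neg h]; linarith
    · exact absurd h hzim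
    · have hw : 0 ≤ w'.im := by nlinarith [hwsign]
      have hvw : 0 ≤ v * w'.im := mul_nonneg hv.le hw
      rw [abs_of_nonpos (by linarith), abs_of_pos h]; linarith
  have hAnorm : η ≤ ‖A‖ := le_trans (le_trans hz hAim) (Complex.abs_im_le_norm A)
  have hwnorm : ‖w'‖ ≤ 1 / η := by
    have h1 : ‖w'‖ * ‖A‖ = 1 := by
      rw [← norm_mul, hwA, norm_one]
    have hApos : 0 < ‖A‖ := lt_of_lt_of_le hη0 hAnorm
    have h2 : ‖w'‖ = 1 / ‖A‖ := by
      rw [eq_div_iff hApos.ne']; exact h1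
    rw [h2]
    exact one_div_le_one_div_of_le hη0 hAnorm
  constructor
  · exact hwnorm
  · have heq : w' * (-z - (v:ℂ) * w') = 1 := hwA
    have hzinv : z⁻¹ * z = 1 := inv_mul_cancel₀ hz0
    linear_combination (-z⁻¹) * heq - w' * hzinv

lemma point_contraction (v η : ℝ) (hv : 0 < v) (hη4 : 4 * v ≤ η ^ 2) (hη0 : 0 < η)
    (ζ w' Tx rx : ℂ)
    (hζ : ‖ζ‖ ≤ 1 / η) (hw : ‖w'‖ ≤ 1 / η) (hrx : ‖rx‖ ≤ 2 / η)
    (heq_r : rx = ζ + ζ * (v:ℂ) * rx * Tx) (heq_w : w' = ζ + ζ * (v:ℂ) * w' ^ 2) :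
    ‖rx - w'‖ ≤ (2/3) * ‖Tx - w'‖ := by
  have hkey : (rx - w') * (1 - ζ * (v:ℂ) * w') = ζ * (v:ℂ) * rx * (Tx - w') := by
    linear_combination heq_r - heq_w
  have hvq : v / η^2 ≤ 1/4 := by
    rw [div_le_iff₀ (by positivity)]; linarith
  have h1 : ‖ζ * (v:ℂ) * w'‖ ≤ 1/4 := by
    calc ‖ζ * (v:ℂ) * w'‖ = ‖ζ‖ * v * ‖w'‖ := by
          rw [norm_mul, norm_mul, Complex.norm_real, Real.norm_eq_abs, abs_of_pos hv]
      _ ≤ (1/η) * v * (1/η) := by gcongr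
      _ = v / η^2 := by ring
      _ ≤ 1/4 := hvq
  have h2 : (3:ℝ)/4 ≤ ‖1 - ζ * (v:ℂ) * w'‖ := by
    have := norm_sub_norm_le (1 : ℂ) (ζ * (v:ℂ) * w')
    rw [norm_one] at this
    linarith
  have h3 : ‖ζ * (v:ℂ) * rx‖ ≤ 1/2 := by
    calc ‖ζ * (v:ℂ) * rx‖ = ‖ζ‖ * v * ‖rx‖ := by
          rw [norm_mul, norm_mul, Complex.norm_real, Real.norm_eq_abs, abs_of_pos hv]
      _ ≤ (1/η) * v * (2/η) := by gcongr
      _ = 2 * (v / η^2) := by ring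
      _ ≤ 1/2 := by linarith
  have h4 : ‖rx - w'‖ * ‖1 - ζ * (v:ℂ) * w'‖ = ‖ζ * (v:ℂ) * rx‖ * ‖Tx - w'‖ := by
    rw [← norm_mul, ← norm_mul, hkey]
  nlinarith [norm_nonneg (rx - w'), norm_nonneg (Tx - w'), norm_nonneg (1 - ζ * (v:ℂ) * w')]
end

section
open MeasureTheory Filter Set

set_option maxHeartbeats 2000000 in
lemma key_induction
    {u : ℝ → ℝ} {ub b v η : ℝ}
    (hu_even : ∀ t, u (-t) = u t) (hu_nonneg : ∀ t, 0 ≤ u t)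
    (hu_mono : ∀ ⦃s t : ℝ⦄, 0 ≤ s → s ≤ t → u t ≤ u s) (hu_L1 : Integrable u)
    (hub : ∀ t, u t ≤ ub) (hub0 : 0 ≤ ub)
    (hhalf : (∫ t in Ioi (0:ℝ), u t) = 1/2)
    (hv : 0 < v) (hη4 : 4 * v ≤ η ^ 2) (hη0 : 0 < η)
    (n : ℕ) (hn : 1 ≤ n) (hb1 : 1 ≤ b) (hb24 : ub / b ≤ 1/24)
    (M : ℕ) (hM : 1 ≤ M)
    (z : ℂ) (r' : ℤ → ℂ) (w' : ℂ)
    (hζ : ‖(-z⁻¹ : ℂ)‖ ≤ 1/η) (hw : ‖w'‖ ≤ 1/η)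
    (hweq : w' = -z⁻¹ + -z⁻¹ * (v:ℂ) * w' ^ 2)
    (hr_bdd : ∀ x : ℤ, |x| ≤ (n:ℤ) → ‖r' x‖ ≤ 2/η)
    (hr_eq : ∀ x : ℤ, |x| ≤ (n:ℤ) → r' x = -z⁻¹ + -z⁻¹ * (v:ℂ) * r' x *
      ∑ s ∈ Finset.Icc (-(n:ℤ)) (n:ℤ), r' s * ((bandU u b s x : ℝ) : ℂ)) :
    ∀ j : ℕ, ∀ x : ℤ, ((|x| : ℤ) : ℝ) ≤ (n : ℝ) - b * ((j * M : ℕ) : ℝ) →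
      ‖r' x - w'‖ ≤ (3/4)^j * (3/η) +
        4 * ((3/η) * ((1 - 2 * ∫ t in Ioc (0:ℝ) (M:ℝ), u t) + 3 * (ub/b))) := by
  have hb : (0:ℝ) < b := lt_of_lt_of_le one_pos hb1
  set J : ℝ := ∫ t in Ioc (0:ℝ) (M:ℝ), u t with hJ
  set δ : ℝ := 1 - 2 * J with hδ
  set E : ℝ := (3/η) * (δ + 3 * (ub/b)) with hE
  have hJhalf : J ≤ 1/2 := by
    rw [hJ, ← hhalf]
    refine setIntegral_mono_set hu_L1.integrableOn
      (Eventually.of_forall fun t => hu_nonneg t) (HasSubset.Subset.eventuallyLE ?_)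
    exact Ioc_subset_Ioi_self
  have hδ0 : 0 ≤ δ := by rw [hδ]; linarith
  have hβ0 : 0 ≤ δ + 3 * (ub/b) := by positivity
  have hE0 : 0 ≤ E := by rw [hE]; positivity
  have htail : (∫ t in Ioi ((M:ℕ):ℝ), u t) = δ / 2 := by
    have hun : Ioc (0:ℝ) (M:ℝ) ∪ Ioi (M:ℝ) = Ioi (0:ℝ) :=
      Ioc_union_Ioi_eq_Ioi (by positivity)
    have := setIntegral_union (Ioc_disjoint_Ioi le_rfl) measurableSet_Ioi
      (hu_L1.integrableOn (s := Ioc (0:ℝ) (M:ℝ))) (hu_L1.integrableOn (s := Ioi (M:ℝ)))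
    rw [hun, hhalf] at this
    rw [hδ, hJ]; linarith [this]
  intro j
  induction j with
  | zero =>
    intro x hx
    have hxn : |x| ≤ (n:ℤ) := by
      have : ((|x| : ℤ) : ℝ) ≤ (n : ℝ) := by
        simpa using hx
      exact_mod_cast this
    have h1 : ‖r' x - w'‖ ≤ 2/η + 1/η :=
      le_trans (norm_sub_le _ _) (add_le_add (hr_bdd x hxn) hw)
    have : (2:ℝ)/η + 1/η = 3/η := by ring
    rw [this] at h1
    simpa using le_trans h1 (by linarith)
  | succ j ih =>
    intro x hx
    have hMle : ((j * M : ℕ):ℝ) + (M:ℝ) = (((j+1) * M : ℕ):ℝ) := by push_cast; ring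
    have hbM0 : (0:ℝ) < b * (M:ℝ) := by
      have : (1:ℝ) ≤ (M:ℝ) := by exact_mod_cast hM
      nlinarith
    have hxn : |x| ≤ (n:ℤ) := by
      have h0 : (0:ℝ) ≤ b * (((j+1) * M : ℕ):ℝ) := by positivity
      have : ((|x| : ℤ) : ℝ) ≤ (n : ℝ) := by linarith
      exact_mod_cast this
    have hxM : ((|x| : ℤ) : ℝ) ≤ (n:ℝ) - b * (M:ℝ) := by
      have h1 : b * (M:ℝ) ≤ b * (((j+1) * M : ℕ):ℝ) := by
        have : (M:ℝ) ≤ (((j+1) * M : ℕ):ℝ) := by push_cast; nlinarith [Nat.cast_nonneg (α := ℝ) j, Nat.cast_nonneg (α := ℝ) M]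
        nlinarith
      linarith
    set T : ℂ := ∑ s ∈ Finset.Icc (-(n:ℤ)) (n:ℤ), r' s * ((bandU u b s x : ℝ) : ℂ) with hT
    set S : ℝ := ∑ s ∈ Finset.Icc (-(n:ℤ)) (n:ℤ), bandU u b s x with hS
    have hUnn : ∀ s : ℤ, 0 ≤ bandU u b s x := by
      intro s; rw [bandU_eq_g]
      exact mul_nonneg (inv_nonneg.mpr hb.le) (hu_nonneg _)
    have hcontr : ‖r' x - w'‖ ≤ (2/3) * ‖T - w'‖ :=
      point_contraction v η hv hη4 hη0 (-z⁻¹) w' T (r' x) hζ hw (hr_bdd x hxn)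
        (hr_eq x hxn) hweq
    -- decomposition of T - w'
    have hScast : ((S:ℝ):ℂ) = ∑ s ∈ Finset.Icc (-(n:ℤ)) (n:ℤ), ((bandU u b s x : ℝ) : ℂ) := by
      rw [hS]; push_cast; rfl
    have hTdec : T - w' = (∑ s ∈ Finset.Icc (-(n:ℤ)) (n:ℤ),
        (r' s - w') * ((bandU u b s x : ℝ) : ℂ)) + w' * (((S:ℝ):ℂ) - 1) := by
      have e1 : ∑ s ∈ Finset.Icc (-(n:ℤ)) (n:ℤ), (r' s - w') * ((bandU u b s x : ℝ) : ℂ)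
          = T - w' * ((S:ℝ):ℂ) := by
        rw [hT, hScast, Finset.mul_sum, ← Finset.sum_sub_distrib]
        exact Finset.sum_congr rfl fun s _ => by ring
      rw [e1]; ring
    have hnormT : ‖T - w'‖ ≤ (∑ s ∈ Finset.Icc (-(n:ℤ)) (n:ℤ),
        ‖r' s - w'‖ * bandU u b s x) + (1/η) * |S - 1| := by
      rw [hTdec]
      refine le_trans (norm_add_le _ _) (add_le_add ?_ ?_)
      · refine le_trans (norm_sum_le _ _) (le_of_eq (Finset.sum_congr rfl fun s _ => ?_))
        rw [norm_mul, Complex.norm_real, Real.norm_eq_abs, abs_of_nonneg (hUnn s)]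
      · rw [norm_mul]
        have : (((S:ℝ):ℂ) - 1) = (((S - 1 : ℝ)):ℂ) := by push_cast; ring
        rw [this, Complex.norm_real, Real.norm_eq_abs]
        gcongr
    -- bound |S - 1|
    have hSub : S ≤ 1 + 3 * (ub/b) := by
      have := S_upper hu_even hu_nonneg hu_mono hu_L1 hub hub0 hb hhalf n hn x
      rw [← hS] at this
      have e : 3 * ub / b = 3 * (ub/b) := by ring
      linarith [e ▸ this]
    have hSlb : 1 - δ - 3 * (ub/b) ≤ S := by
      have := S_lower hu_even hu_nonneg hu_mono hu_L1 hub hub0 hb1 n M hM x hxM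
      rw [← hJ, ← hS] at this
      have e : 3 * ub / b = 3 * (ub/b) := by ring
      rw [hδ]; linarith [e ▸ this]
    have hSabs : |S - 1| ≤ δ + 3 * (ub/b) := by
      rw [abs_le]; constructor <;> linarith
    -- split the sum
    set D : ℝ := (3/4)^j * (3/η) + 4 * E with hD
    have hD0 : 0 ≤ D := by
      rw [hD]; positivity
    set P : ℤ → Prop := fun s => ((|s| : ℤ) : ℝ) ≤ (n : ℝ) - b * ((j * M : ℕ) : ℝ) with hP
    have hsplit := Finset.sum_filter_add_sum_filter_not (Finset.Icc (-(n:ℤ)) (n:ℤ)) P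
      (fun s => ‖r' s - w'‖ * bandU u b s x)
    have hgood : ∑ s ∈ (Finset.Icc (-(n:ℤ)) (n:ℤ)).filter P,
        ‖r' s - w'‖ * bandU u b s x ≤ D * (1 + 3 * (ub/b)) := by
      calc ∑ s ∈ (Finset.Icc (-(n:ℤ)) (n:ℤ)).filter P, ‖r' s - w'‖ * bandU u b s x
          ≤ ∑ s ∈ (Finset.Icc (-(n:ℤ)) (n:ℤ)).filter P, D * bandU u b s x := by
            refine Finset.sum_le_sum fun s hs => ?_
            rw [Finset.mem_filter] at hs
            exact mul_le_mul_of_nonneg_right (ih s hs.2) (hUnn s)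
        _ = D * ∑ s ∈ (Finset.Icc (-(n:ℤ)) (n:ℤ)).filter P, bandU u b s x := by
            rw [Finset.mul_sum]
        _ ≤ D * S := by
            refine mul_le_mul_of_nonneg_left ?_ hD0
            rw [hS]
            exact Finset.sum_le_sum_of_subset_of_nonneg (Finset.filter_subset _ _)
              (fun s _ _ => hUnn s)
        _ ≤ D * (1 + 3 * (ub/b)) := mul_le_mul_of_nonneg_left hSub hD0
    have hbad : ∑ s ∈ (Finset.Icc (-(n:ℤ)) (n:ℤ)).filter (fun s => ¬ P s),
        ‖r' s - w'‖ * bandU u b s x ≤ (3/η) * (δ + 3 * (ub/b)) := by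
      set m₀ : ℤ := ⌈b * (M:ℝ)⌉ with hm₀
      have hm₀1 : 1 ≤ m₀ := by
        have : 0 < m₀ := Int.ceil_pos.mpr hbM0
        omega
      have hm₀le : b * (M:ℝ) ≤ (m₀ : ℝ) := Int.le_ceil _
      have hMb : (M:ℝ) ≤ (m₀:ℝ) / b := by
        rw [le_div_iff₀ hb]; linarith [mul_comm b (M:ℝ)]
      have hsubf : (Finset.Icc (-(n:ℤ)) (n:ℤ)).filter (fun s => ¬ P s) ⊆
          (Finset.Icc (-(n:ℤ)) (n:ℤ)).filter (fun s => m₀ ≤ |s - x|) := by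
        intro s hs
        rw [Finset.mem_filter] at *
        refine ⟨hs.1, ?_⟩
        have hns : ¬ (((|s| : ℤ) : ℝ) ≤ (n : ℝ) - b * ((j * M : ℕ) : ℝ)) := hs.2
        push_neg at hns
        have habs : ((|s - x| : ℤ) : ℝ) ≥ ((|s| : ℤ) : ℝ) - ((|x| : ℤ) : ℝ) := by
          have := abs_sub_abs_le_abs_sub s x
          exact_mod_cast this
        have hgap : b * ((j * M : ℕ) : ℝ) + b * (M:ℝ) = b * (((j+1) * M : ℕ) : ℝ) := by
          push_cast; ring
        have : b * (M:ℝ) ≤ ((|s - x| : ℤ) : ℝ) := by linarith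
        rw [hm₀, Int.ceil_le]
        exact this
      calc ∑ s ∈ (Finset.Icc (-(n:ℤ)) (n:ℤ)).filter (fun s => ¬ P s),
            ‖r' s - w'‖ * bandU u b s x
          ≤ ∑ s ∈ (Finset.Icc (-(n:ℤ)) (n:ℤ)).filter (fun s => ¬ P s),
            (3/η) * bandU u b s x := by
            refine Finset.sum_le_sum fun s hs => ?_
            refine mul_le_mul_of_nonneg_right ?_ (hUnn s)
            rw [Finset.mem_filter, Finset.mem_Icc] at hs
            have hsn : |s| ≤ (n:ℤ) := by
              rcases hs.1 with ⟨h1, h2⟩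
              cases abs_cases s <;> omega
            calc ‖r' s - w'‖ ≤ ‖r' s‖ + ‖w'‖ := norm_sub_le _ _
              _ ≤ 2/η + 1/η := add_le_add (hr_bdd s hsn) hw
              _ = 3/η := by ring
        _ = (3/η) * ∑ s ∈ (Finset.Icc (-(n:ℤ)) (n:ℤ)).filter (fun s => ¬ P s),
            bandU u b s x := by rw [Finset.mul_sum]
        _ ≤ (3/η) * ∑ s ∈ (Finset.Icc (-(n:ℤ)) (n:ℤ)).filter (fun s => m₀ ≤ |s - x|),
            bandU u b s x := by
            refine mul_le_mul_of_nonneg_left ?_ (by positivity)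
            exact Finset.sum_le_sum_of_subset_of_nonneg hsubf (fun s _ _ => hUnn s)
        _ ≤ (3/η) * (2 * (ub/b) + 2 * ∫ t in Ioi ((M:ℕ):ℝ), u t) := by
            refine mul_le_mul_of_nonneg_left ?_ (by positivity)
            have := off_mass hu_even hu_nonneg hu_mono hu_L1 hub hub0 hb n x m₀ hm₀1
              ((M:ℕ):ℝ) hMb
            calc ∑ s ∈ (Finset.Icc (-(n:ℤ)) (n:ℤ)).filter (fun s => m₀ ≤ |s - x|),
                  bandU u b s x ≤ 2 * (ub / b) + 2 * ∫ t in Ioi ((M:ℕ):ℝ), u t := this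
              _ = _ := by ring
        _ ≤ (3/η) * (δ + 3 * (ub/b)) := by
            refine mul_le_mul_of_nonneg_left ?_ (by positivity)
            rw [htail]
            have : 0 ≤ ub / b := by positivity
            linarith
    -- combine
    have htot : ‖T - w'‖ ≤ D * (1 + 3 * (ub/b)) + (3/η) * (δ + 3 * (ub/b)) +
        (1/η) * (δ + 3 * (ub/b)) := by
      have h1 : (∑ s ∈ Finset.Icc (-(n:ℤ)) (n:ℤ), ‖r' s - w'‖ * bandU u b s x)
          ≤ D * (1 + 3 * (ub/b)) + (3/η) * (δ + 3 * (ub/b)) := by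
        rw [← hsplit]; exact add_le_add hgood hbad
      have h2 : (1/η) * |S - 1| ≤ (1/η) * (δ + 3 * (ub/b)) :=
        mul_le_mul_of_nonneg_left hSabs (by positivity)
      linarith [hnormT]
    have hfinal : ‖r' x - w'‖ ≤ (3/4) * D + E := by
      have h1 : (2:ℝ)/3 * (1 + 3 * (ub/b)) ≤ 3/4 := by linarith
      have h2 : ‖r' x - w'‖ ≤ (2/3) * (D * (1 + 3 * (ub/b)) + (3/η) * (δ + 3 * (ub/b)) +
          (1/η) * (δ + 3 * (ub/b))) :=
        le_trans hcontr (by linarith [htot])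
      have h3 : (2:ℝ)/3 * (D * (1 + 3 * (ub/b))) ≤ (3/4) * D := by
        have := mul_le_mul_of_nonneg_right h1 hD0
        nlinarith
      have h4 : (2:ℝ)/3 * ((3/η) * (δ + 3 * (ub/b)) + (1/η) * (δ + 3 * (ub/b))) ≤ E := by
        rw [hE]
        have hinvη : (0:ℝ) ≤ η⁻¹ := by positivity
        have hβ0' : (0:ℝ) ≤ (1 - 2*J) + 3 * (ub/b) := by rw [← hδ]; exact hβ0
        have h5 : 0 ≤ ((1 - 2*J) + 3 * (ub/b)) * η⁻¹ := mul_nonneg hβ0' hinvη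
        have h6 : (0:ℝ) ≤ η⁻¹ * ub * b⁻¹ := by positivity
        ring_nf
        nlinarith [h5, h6]
      nlinarith [h2, h3, h4]
    calc ‖r' x - w'‖ ≤ (3/4) * D + E := hfinal
      _ = (3/4)^(j+1) * (3/η) + 4 * E - E + E := by rw [hD]; ring
      _ = (3/4)^(j+1) * (3/η) + 4 * E := by ring
end

section
open MeasureTheory Filter Set


set_option maxHeartbeats 2000000 in
/-- Proposition 4.1: the solution of the fixed-point system is close to w(z) on B_L. -/
theorem band_fixed_point_solution_close_to_w
    (v : ℝ) (hv : 0 < v)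
    (u : ℝ → ℝ) (hu_even : ∀ t, u (-t) = u t) (hu_nonneg : ∀ t, 0 ≤ u t)
    (hu_meas : Measurable u) (hu_bdd : ∃ C, ∀ t, u t ≤ C)
    (hu_mono : ∀ ⦃s t : ℝ⦄, 0 ≤ s → s ≤ t → u t ≤ u s)
    (hu_L1 : Integrable u) (hu_int : (∫ t, u t) = 1)
    (χ : ℝ) (hχ₁ : 1 / 3 < χ) (hχ₂ : χ < 1)
    (w : ℂ → ℂ) (hw_eq : ∀ z : ℂ, z.im ≠ 0 → w z = 1 / (-z - (v : ℂ) * w z))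
    (hw_sign : ∀ z : ℂ, z.im ≠ 0 → 0 ≤ (w z).im * z.im)
    (r : ℕ → ℂ → ℤ → ℂ)
    (hr_bdd : ∀ (n : ℕ) (z : ℂ), 2 * Real.sqrt v + 1 ≤ |z.im| →
      ∀ x : ℤ, |x| ≤ (n : ℤ) → ‖r n z x‖ ≤ 2 / (2 * Real.sqrt v + 1))
    (hr_eq : ∀ (n : ℕ) (z : ℂ), 2 * Real.sqrt v + 1 ≤ |z.im| →
      ∀ x : ℤ, |x| ≤ (n : ℤ) →
        r n z x = -z⁻¹ + -z⁻¹ * (v : ℂ) * r n z x *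
          ∑ s ∈ Finset.Icc (-(n : ℤ)) (n : ℤ),
            r n z s * ((bandU u ((n : ℝ) ^ χ) s x : ℝ) : ℂ))
    (ε : ℝ) (hε : 0 < ε) :
    ∃ L : ℕ, ∃ n₀ : ℕ, ∀ n : ℕ, n₀ ≤ n →
      ∀ z : ℂ, 2 * Real.sqrt v + 1 ≤ |z.im| →
        ∀ x : ℤ, ((|x| : ℤ) : ℝ) ≤ (n : ℝ) - (n : ℝ) ^ χ * (L : ℝ) →
          ‖r n z x - w z‖ ≤ ε := by
  obtain ⟨C, hC⟩ := hu_bdd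
  set ub : ℝ := max C 0 with hubdef
  have hub : ∀ t, u t ≤ ub := fun t => le_trans (hC t) (le_max_left _ _)
  have hub0 : 0 ≤ ub := le_max_right _ _
  set η : ℝ := 2 * Real.sqrt v + 1 with hηdef
  have hη1 : 1 ≤ η := by
    rw [hηdef]; have := Real.sqrt_nonneg v; linarith
  have hη0 : 0 < η := lt_of_lt_of_le one_pos hη1
  have hη4 : 4 * v ≤ η ^ 2 := by
    rw [hηdef]
    nlinarith [Real.sq_sqrt hv.le, Real.sqrt_nonneg v]
  have hhalf : (∫ t in Ioi (0:ℝ), u t) = 1/2 := half_integral hu_even hu_L1 hu_int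
  -- choose M
  have htendM : Tendsto (fun M : ℕ => ∫ t in Ioc (0:ℝ) (M:ℝ), u t) atTop (nhds (1/2)) := by
    have h1 := MeasureTheory.intervalIntegral_tendsto_integral_Ioi (μ := volume) (f := u)
      (a := 0) (b := fun M : ℕ => (M:ℝ)) hu_L1.integrableOn tendsto_natCast_atTop_atTop
    rw [hhalf] at h1
    refine h1.congr fun M => ?_
    rw [intervalIntegral.integral_of_le (Nat.cast_nonneg M)]
  have hδpos : 0 < ε * η / 96 := by positivity
  have hev : ∀ᶠ M : ℕ in atTop, |(∫ t in Ioc (0:ℝ) (M:ℝ), u t) - 1/2| < ε * η / 96 := by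
    have := Metric.tendsto_atTop.mp htendM (ε * η / 96) hδpos
    obtain ⟨N, hN⟩ := this
    exact eventually_atTop.mpr ⟨N, fun M hM => by
      have := hN M hM; rwa [Real.dist_eq] at this⟩
  obtain ⟨M, hM1, hMδ⟩ : ∃ M : ℕ, 1 ≤ M ∧
      1 - 2 * (∫ t in Ioc (0:ℝ) (M:ℝ), u t) ≤ ε * η / 48 := by
    obtain ⟨N, hN⟩ := eventually_atTop.mp hev
    refine ⟨max N 1, le_max_right _ _, ?_⟩
    have := hN (max N 1) (le_max_left _ _)
    have h2 := abs_le.mp this.le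
    linarith [h2.1]
  -- choose k
  obtain ⟨k, hk⟩ : ∃ k : ℕ, (3/4:ℝ)^k < ε * η / 6 :=
    exists_pow_lt_of_lt_one (by positivity) (by norm_num)
  -- choose n₀
  set B₀ : ℝ := max 1 (max (24 * ub) (144 * ub / (ε * η))) with hB₀
  have htendb : Tendsto (fun n : ℕ => (n:ℝ) ^ χ) atTop atTop := by
    have hχ0 : 0 < χ := by linarith
    exact (tendsto_rpow_atTop hχ0).comp tendsto_natCast_atTop_atTop
  obtain ⟨n₀, hn₀⟩ := eventually_atTop.mp (htendb.eventually_ge_atTop B₀)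
  refine ⟨k * M, max n₀ 1, fun n hn z hz x hx => ?_⟩
  have hn1 : 1 ≤ n := le_trans (le_max_right _ _) hn
  set b : ℝ := (n:ℝ) ^ χ with hbdef
  have hbB : B₀ ≤ b := hn₀ n (le_trans (le_max_left _ _) hn)
  have hb1 : 1 ≤ b := le_trans (le_max_left _ _) hbB
  have hb : 0 < b := lt_of_lt_of_le one_pos hb1
  have hb24 : ub / b ≤ 1/24 := by
    rw [div_le_iff₀ hb]
    have : 24 * ub ≤ b := le_trans (le_trans (le_max_left _ _) (le_max_right _ _)) hbB
    linarith
  have hbε : ub / b ≤ ε * η / 144 := by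
    rw [div_le_iff₀ hb]
    have h1 : 144 * ub / (ε * η) ≤ b :=
      le_trans (le_trans (le_max_right _ _) (le_max_right _ _)) hbB
    rw [div_le_iff₀ (by positivity)] at h1
    nlinarith
  -- w properties
  have hzim : z.im ≠ 0 := by
    intro h; rw [h] at hz; simp at hz; linarith
  obtain ⟨hwn, hweq⟩ := w_properties v η hv hηdef z (w z) hz (hw_eq z hzim) (hw_sign z hzim)
  have hζ : ‖(-z⁻¹ : ℂ)‖ ≤ 1/η := by
    rw [norm_neg, norm_inv]
    have hzn : η ≤ ‖z‖ := le_trans hz (Complex.abs_im_le_norm z)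
    have : ‖z‖⁻¹ ≤ η⁻¹ := by
      apply inv_anti₀ hη0 hzn
    rwa [one_div]
  -- apply key induction
  have hkey := key_induction hu_even hu_nonneg hu_mono hu_L1 hub hub0 hhalf hv hη4 hη0
    n hn1 hb1 hb24 M hM1 z (r n z) (w z) hζ hwn hweq
    (fun x hx => hr_bdd n z hz x hx) (fun x hx => hr_eq n z hz x hx) k x ?_
  · set J : ℝ := ∫ t in Ioc (0:ℝ) (M:ℝ), u t with hJ
    set δ : ℝ := 1 - 2 * J with hδdef
    have hδ48 : δ ≤ ε * η / 48 := hMδ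
    have h1 : (3/4:ℝ)^k * (3/η) ≤ ε / 2 := by
      have h2 : (3/4:ℝ)^k * (3/η) ≤ (ε * η / 6) * (3/η) := by
        apply mul_le_mul_of_nonneg_right hk.le (by positivity)
      have h3 : (ε * η / 6) * (3/η) = ε / 2 := by field_simp; ring
      linarith
    have h4 : 4 * ((3/η) * (δ + 3 * (ub/b))) ≤ ε / 2 := by
      have h5 : δ + 3 * (ub/b) ≤ ε * η / 48 + 3 * (ε * η / 144) := by linarith
      have h6 : ε * η / 48 + 3 * (ε * η / 144) = ε * η / 24 := by ring
      have h7 : 4 * ((3/η) * (δ + 3 * (ub/b))) ≤ 4 * ((3/η) * (ε * η / 24)) := by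
        have : (0:ℝ) ≤ 3/η := by positivity
        nlinarith
      have h8 : 4 * ((3/η) * (ε * η / 24)) = ε / 2 := by field_simp; ring
      linarith
    calc ‖r n z x - w z‖ ≤ (3/4)^k * (3/η) + 4 * ((3/η) * (δ + 3 * (ub/b))) := hkey
      _ ≤ ε / 2 + ε / 2 := add_le_add h1 h4
      _ = ε := by ring
  · -- the geometry condition
    have : ((k * M : ℕ) : ℝ) = (k:ℝ) * (M:ℝ) := by push_cast; ring
    rw [this]
    have h9 : (n:ℝ) ^ χ * ((k * M : ℕ) : ℝ) = b * ((k:ℝ) * (M:ℝ)) := by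
      rw [hbdef, this]
    push_cast at hx ⊢
    linarith [hx]
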